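/- Suppose the infinite word x is not ultimately periodic and lim inf_{n→∞} p(n, x)/n < 2. Then for each n ≥ 1 there exists a unique essential right-special factor of x of length n. -/

import Mathlib

open Filter

variable {A : Type*}

/-- The factor of the infinite word `x` of length `n` starting at position `j` (0-indexed). -/
def subwordAt (x : ℕ → A) (j n : ℕ) : List A := (List.range n).map fun i => x (j + i)

/-- `w` is a factor (subword) of the infinite word `x`. -/
def IsFactor (w : List A) (x : ℕ → A) : Prop := ∃ j, subwordAt x j w.length = w

/-- The subword complexity `p(n, x)`: the number of distinct length-`n` factors of `x`. -/
noncomputable def complexity (x : ℕ → A) (n : ℕ) : ℕ :=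
  Set.ncard {w : List A | w.length = n ∧ IsFactor w x}

/-- `x` is ultimately periodic. -/
def UltimatelyPeriodic (x : ℕ → A) : Prop := ∃ N T, 0 < T ∧ ∀ i ≥ N, x (i + T) = x i

/-- `w` is a left-special factor of `x`. -/
def LeftSpecial (w : List A) (x : ℕ → A) : Prop :=
  ∃ a b : A, a ≠ b ∧ IsFactor (a :: w) x ∧ IsFactor (b :: w) x

/-- `w` is a right-special factor of `x`. -/
def RightSpecial (w : List A) (x : ℕ → A) : Prop :=
  ∃ a b : A, a ≠ b ∧ IsFactor (w ++ [a]) x ∧ IsFactor (w ++ [b]) x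

/-- `w` occurs infinitely many times in `x`. -/
def OccursInfinitely (w : List A) (x : ℕ → A) : Prop :=
  {j : ℕ | subwordAt x j w.length = w}.Infinite

/-- `x` is `n`-recurrent: every length-`n` factor occurs infinitely often. -/
def NRecurrent (n : ℕ) (x : ℕ → A) : Prop :=
  ∀ j : ℕ, {i : ℕ | subwordAt x i n = subwordAt x j n}.Infinite

/-- The shift of `x` by `s` places. -/
def shiftWord (x : ℕ → A) (s : ℕ) : ℕ → A := fun i => x (s + i)

/-- `s_m`: the length of the `m`-th non-recurrent prefix of `x`. -/
noncomputable def srec (x : ℕ → A) (m : ℕ) : ℕ := sInf {s : ℕ | NRecurrent m (shiftWord x s)}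

/-- `z_m`: the maximal `m`-recurrent tail of `x`, so that `x = a_m z_m`. -/
noncomputable def ztail (x : ℕ → A) (m : ℕ) : ℕ → A := shiftWord x (srec x m)

/-- The repetition function `r(n, x)`: the least `m ≥ 1` such that
`x_{m+1} … x_{m+n} = x_{i+1} … x_{i+n}` for some `0 ≤ i < m`. -/
noncomputable def repFn (x : ℕ → A) (n : ℕ) : ℕ :=
  sInf {m : ℕ | 0 < m ∧ ∃ i < m, subwordAt x m n = subwordAt x i n}

/-- A right-special factor `w` is essential if it is a suffix of right-special
factors of every length `m ≥ |w|`. -/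
def EssentialRightSpecial (w : List A) (x : ℕ → A) : Prop :=
  RightSpecial w x ∧
    ∀ m, w.length ≤ m → ∃ W : List A, W.length = m ∧ RightSpecial W x ∧ W.drop (m - w.length) = w

/-- `C` is (the word read along) a cycle at `w` in the Rauzy graph `𝒢_n(y)`:
it has length `> n`, prefix `w`, suffix `w`, and is a factor of `y`. -/
def IsCycleAt (y : ℕ → A) (n : ℕ) (w C : List A) : Prop :=
  n < C.length ∧ C.take n = w ∧ C.drop (C.length - n) = w ∧ IsFactor C y

/-- The Rauzy graph `𝒢_n(y)` is of `∞`-shape with bi-special vertex `w`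
and the two (simple) cycles `U` and `V`. -/
def InftyShape (y : ℕ → A) (n : ℕ) (w U V : List A) : Prop :=
  w.length = n ∧ LeftSpecial w y ∧ RightSpecial w y ∧
  (∀ v : List A, v.length = n → IsFactor v y → (LeftSpecial v y ∨ RightSpecial v y) → v = w) ∧
  IsCycleAt y n w U ∧ IsCycleAt y n w V ∧ U ≠ V ∧
  (∀ j, 0 < j → j < U.length - n → (U.drop j).take n ≠ w) ∧
  (∀ j, 0 < j → j < V.length - n → (V.drop j).take n ≠ w) ∧
  (∀ v : List A, v.length = n → IsFactor v y →
    (∃ j ≤ U.length - n, (U.drop j).take n = v) ∨ (∃ j ≤ V.length - n, (V.drop j).take n = v))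

/-- The word read along the concatenated path `U V^b U`, where `U`, `V` are
cycles at a vertex of length `n` (gluing overlaps of length `n`). -/
def cyclePow (n : ℕ) (U V : List A) (b : ℕ) : List A :=
  U ++ (List.replicate b (V.drop n)).flatten ++ U.drop n

/-- The irrationality exponent of a real number, valued in `ℝ≥0∞`. -/
noncomputable def irrationalityExponent (ξ : ℝ) : ENNReal :=
  ⨆ (μ : ℝ) (_ : {q : ℕ | 0 < q ∧ ∃ p : ℤ, |ξ - p / q| < 1 / (q : ℝ) ^ μ}.Infinite),
    ENNReal.ofReal μ
section Aux
variable {A : Type*}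
lemma subwordAt_length (x : ℕ → A) (j n : ℕ) : (subwordAt x j n).length = n := by
  simp [subwordAt]

lemma subwordAt_drop (x : ℕ → A) (j n k : ℕ) :
    (subwordAt x j n).drop k = subwordAt x (j + k) (n - k) := by
  apply List.ext_getElem
  · simp [subwordAt]
  · intro i h1 h2
    simp only [subwordAt, List.getElem_drop, List.getElem_map, List.getElem_range]
    congr 1
    omega

lemma subwordAt_take (x : ℕ → A) (j n k : ℕ) (h : k ≤ n) :
    (subwordAt x j n).take k = subwordAt x j k := by
  apply List.ext_getElem
  · simp [subwordAt]; omega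
  · intro i h1 h2
    simp [subwordAt]

lemma subwordAt_succ (x : ℕ → A) (j n : ℕ) :
    subwordAt x j (n + 1) = subwordAt x j n ++ [x (j + n)] := by
  simp [subwordAt, List.range_succ]

lemma isFactor_subwordAt (x : ℕ → A) (j n : ℕ) : IsFactor (subwordAt x j n) x :=
  ⟨j, by rw [subwordAt_length]⟩

lemma IsFactor.drop {w : List A} {x : ℕ → A} (h : IsFactor w x) (k : ℕ) :
    IsFactor (w.drop k) x := by
  obtain ⟨j, hj⟩ := h
  refine ⟨j + k, ?_⟩
  rw [List.length_drop, ← hj, subwordAt_length, subwordAt_drop]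

lemma IsFactor.take {w : List A} {x : ℕ → A} (h : IsFactor w x) (k : ℕ) (hk : k ≤ w.length) :
    IsFactor (w.take k) x := by
  obtain ⟨j, hj⟩ := h
  refine ⟨j, ?_⟩
  rw [List.length_take, min_eq_left hk, ← hj, subwordAt_take]
  rw [← hj, subwordAt_length] at hk; exact hk

lemma IsFactor.extend {w : List A} {x : ℕ → A} (h : IsFactor w x) :
    ∃ a, IsFactor (w ++ [a]) x := by
  obtain ⟨j, hj⟩ := h
  refine ⟨x (j + w.length), ⟨j, ?_⟩⟩
  rw [List.length_append, List.length_singleton, subwordAt_succ, hj]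

lemma RightSpecial.drop {w : List A} {x : ℕ → A} (h : RightSpecial w x) (k : ℕ)
    (hk : k ≤ w.length) : RightSpecial (w.drop k) x := by
  obtain ⟨a, b, hab, ha, hb⟩ := h
  refine ⟨a, b, hab, ?_, ?_⟩
  · have := ha.drop k
    rwa [List.drop_append_of_le_length hk] at this
  · have := hb.drop k
    rwa [List.drop_append_of_le_length hk] at this

lemma subwordAt_eq_iff (x : ℕ → A) (j k n : ℕ) :
    subwordAt x j n = subwordAt x k n ↔ ∀ i < n, x (j + i) = x (k + i) := by
  constructor
  · intro h i hi
    have := congrArg (fun l : List A => l[i]?) h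
    simpa [subwordAt, hi] using this
  · intro h
    apply List.ext_getElem
    · rw [subwordAt_length, subwordAt_length]
    · intro i h1 h2
      simp only [subwordAt, List.getElem_map, List.getElem_range]
      exact h i (by simpa [subwordAt] using h1)

/-- If no length-`n` factor is right special, `x` is ultimately periodic. -/
lemma ultimatelyPeriodic_of_no_rightSpecial [Finite A] (x : ℕ → A) (n : ℕ)
    (h : ∀ w : List A, w.length = n → ¬ RightSpecial w x) : UltimatelyPeriodic x := by
  -- unique right extension
  have key : ∀ j k : ℕ, subwordAt x j n = subwordAt x k n → x (j + n) = x (k + n) := by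
    intro j k hjk
    by_contra hne
    apply h (subwordAt x j n) (subwordAt_length x j n)
    refine ⟨x (j + n), x (k + n), hne, ⟨j, ?_⟩, ⟨k, ?_⟩⟩
    · rw [List.length_append, subwordAt_length, List.length_singleton, subwordAt_succ]
    · rw [List.length_append, subwordAt_length, List.length_singleton, subwordAt_succ, hjk]
  -- pigeonhole on Fin n → A
  obtain ⟨j, k, hjk, hfjk⟩ := Finite.exists_ne_map_eq_of_infinite
    (fun j : ℕ => (fun i : Fin n => x (j + i)))
  wlog hlt : j < k generalizing j k
  · exact this k j (Ne.symm hjk) hfjk.symm (by omega)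
  have hsub : subwordAt x j n = subwordAt x k n := by
    rw [subwordAt_eq_iff]
    intro i hi
    exact congrFun hfjk ⟨i, hi⟩
  have Q : ∀ d, ∀ i ≤ n, x (j + d + i) = x (k + d + i) := by
    intro d
    induction d with
    | zero =>
      intro i hi
      rcases Nat.lt_or_ge i n with hi' | hi'
      · simpa using (subwordAt_eq_iff x j k n).1 hsub i hi'
      · have hin : i = n := by omega
        rw [hin]
        simpa using key j k hsub
    | succ d ih =>
      have hlow : ∀ i < n, x (j + (d+1) + i) = x (k + (d+1) + i) := by
        intro i hi
        have := ih (i + 1) (by omega)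
        convert this using 2 <;> omega
      intro i hi
      rcases Nat.lt_or_ge i n with hi' | hi'
      · exact hlow i hi'
      · have hin : i = n := by omega
        rw [hin]
        have hsub' : subwordAt x (j + (d+1)) n = subwordAt x (k + (d+1)) n := by
          rw [subwordAt_eq_iff]; exact hlow
        exact key _ _ hsub'
  refine ⟨j, k - j, by omega, fun i hi => ?_⟩
  have := Q (i - j) 0
  simp only [Nat.add_zero] at this
  have h2 := this (by omega)
  have e1 : j + (i - j) = i := by omega
  have e2 : k + (i - j) = i + (k - j) := by omega
  rw [e1, e2] at h2
  exact h2.symm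

lemma exists_rightSpecial [Finite A] (x : ℕ → A) (hx : ¬ UltimatelyPeriodic x) (n : ℕ) :
    ∃ w : List A, w.length = n ∧ RightSpecial w x := by
  by_contra hc
  push_neg at hc
  exact hx (ultimatelyPeriodic_of_no_rightSpecial x n fun w hw => hc w hw)

lemma factorSet_finite [Finite A] (x : ℕ → A) (n : ℕ) :
    {w : List A | w.length = n ∧ IsFactor w x}.Finite :=
  (List.finite_length_eq A n).subset fun w hw => hw.1

lemma factorSet_nonempty (x : ℕ → A) (n : ℕ) :
    {w : List A | w.length = n ∧ IsFactor w x}.Nonempty :=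
  ⟨subwordAt x 0 n, subwordAt_length x 0 n, isFactor_subwordAt x 0 n⟩


lemma complexity_add_two_le [Finite A] (x : ℕ → A) (m : ℕ)
    {w₁ w₂ : List A} (h₁ : w₁.length = m) (h₂ : w₂.length = m) (hne : w₁ ≠ w₂)
    (hr₁ : RightSpecial w₁ x) (hr₂ : RightSpecial w₂ x) :
    complexity x m + 2 ≤ complexity x (m + 1) := by
  classical
  set S : ℕ → Set (List A) := fun k => {w : List A | w.length = k ∧ IsFactor w x} with hS
  let ext : List A → A := fun v => if h : ∃ a, IsFactor (v ++ [a]) x then h.choose else x 0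
  have hext : ∀ v ∈ S m, IsFactor (v ++ [ext v]) x := by
    intro v hv
    have h : ∃ a, IsFactor (v ++ [a]) x := hv.2.extend
    simp only [ext, dif_pos h]
    exact h.choose_spec
  let e : List A → List A := fun v => v ++ [ext v]
  have hmem : ∀ v ∈ S m, e v ∈ S (m + 1) := by
    intro v hv
    exact ⟨by simp [e, hv.1], hext v hv⟩
  -- injectivity
  have cancel : ∀ v v' : List A, v.length = m → v'.length = m →
      ∀ a a' : A, v ++ [a] = v' ++ [a'] → v = v' ∧ a = a' := by
    intro v v' hv hv' a a' hh
    have := List.append_inj hh (by omega)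
    refine ⟨this.1, ?_⟩
    simpa using this.2
  have hinj : Set.InjOn e (S m) := by
    intro v hv v' hv' hvv'
    exact (cancel v v' hv.1 hv'.1 _ _ hvv').1
  -- the two extra extensions
  have extra : ∀ w : List A, w.length = m → RightSpecial w x →
      ∃ c, c ≠ ext w ∧ IsFactor (w ++ [c]) x := by
    intro w hw hr
    obtain ⟨a, b, hab, ha, hb⟩ := hr
    by_cases hca : ext w = a
    · exact ⟨b, by rw [hca]; exact (Ne.symm hab), hb⟩
    · exact ⟨a, fun hc => hca hc.symm, ha⟩
  obtain ⟨c₁, hc₁, hfc₁⟩ := extra w₁ h₁ hr₁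
  obtain ⟨c₂, hc₂, hfc₂⟩ := extra w₂ h₂ hr₂
  have hu₁ : w₁ ++ [c₁] ∈ S (m + 1) := ⟨by simp [h₁], hfc₁⟩
  have hu₂ : w₂ ++ [c₂] ∈ S (m + 1) := ⟨by simp [h₂], hfc₂⟩
  have hnm₁ : w₁ ++ [c₁] ∉ e '' S m := by
    rintro ⟨v, hv, hve⟩
    obtain ⟨rfl, hcc⟩ := cancel v w₁ hv.1 h₁ _ _ hve
    exact hc₁ hcc.symm
  have hnm₂ : w₂ ++ [c₂] ∉ insert (w₁ ++ [c₁]) (e '' S m) := by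
    rintro (h | ⟨v, hv, hve⟩)
    · exact hne ((cancel w₂ w₁ h₂ h₁ _ _ h).1).symm
    · obtain ⟨rfl, hcc⟩ := cancel v w₂ hv.1 h₂ _ _ hve
      exact hc₂ hcc.symm
  have hfinS : ∀ k, (S k).Finite := fun k => factorSet_finite x k
  have hfin_img : (e '' S m).Finite := (hfinS m).image e
  have hsub : insert (w₂ ++ [c₂]) (insert (w₁ ++ [c₁]) (e '' S m)) ⊆ S (m + 1) := by
    rintro w (rfl | rfl | ⟨v, hv, rfl⟩)
    · exact hu₂
    · exact hu₁
    · exact hmem v hv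
  have hcard : (insert (w₂ ++ [c₂]) (insert (w₁ ++ [c₁]) (e '' S m))).ncard
      = (S m).ncard + 2 := by
    rw [Set.ncard_insert_of_notMem hnm₂ (hfin_img.insert _),
        Set.ncard_insert_of_notMem hnm₁ hfin_img,
        Set.ncard_image_of_injOn hinj]
  have := Set.ncard_le_ncard hsub (hfinS (m + 1))
  rw [hcard] at this
  simpa [complexity, hS] using this

lemma exists_essential [Finite A] (x : ℕ → A) (hx : ¬ UltimatelyPeriodic x) (n : ℕ) :
    ∃ w : List A, w.length = n ∧ EssentialRightSpecial w x := by
  classical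
  -- choice of a right special factor of each length
  choose R hRlen hRrs using exists_rightSpecial x hx
  haveI : Finite {l : List A // l.length = n} :=
    ((List.finite_length_eq A n).subset (fun l hl => hl)).to_subtype
  let h : ℕ → {l : List A // l.length = n} := fun k =>
    ⟨(R (n + k)).drop k, by rw [List.length_drop, hRlen]; omega⟩
  obtain ⟨y, hy⟩ := Finite.exists_infinite_fiber h
  rw [Set.infinite_coe_iff] at hy
  refine ⟨y.val, y.2, ?_, ?_⟩
  · -- y is right special
    obtain ⟨k, hk⟩ := hy.nonempty
    have : h k = y := hk
    rw [← this]
    exact (hRrs (n + k)).drop k (by rw [hRlen]; omega)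
  · intro m hm
    rw [y.2] at hm
    obtain ⟨k, hk, hkm⟩ := hy.exists_gt (m - n)
    have hmk : m ≤ n + k := by omega
    refine ⟨(R (n + k)).drop (n + k - m), ?_, ?_, ?_⟩
    · rw [List.length_drop, hRlen]; omega
    · exact (hRrs (n + k)).drop _ (by rw [hRlen]; omega)
    · rw [List.drop_drop, y.2]
      have : n + k - m + (m - n) = k := by omega
      rw [this]
      exact congrArg Subtype.val hk

lemma liminf_ge_two [Finite A] (x : ℕ → A) (n : ℕ)
    (H : ∀ m, n ≤ m → complexity x m + 2 ≤ complexity x (m + 1)) :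
    (2 : ENNReal) ≤ Filter.liminf
      (fun m : ℕ => (complexity x m : ENNReal) / (m : ENNReal)) Filter.atTop := by
  -- linear lower bound on complexity
  have hpn : 1 ≤ complexity x n :=
    (Set.ncard_pos (factorSet_finite x n)).2 (factorSet_nonempty x n)
  have hlin : ∀ m, n ≤ m → 2 * m + 1 ≤ complexity x m + 2 * n := by
    intro m hm
    induction m with
    | zero =>
      have : n = 0 := by omega
      subst this; omega
    | succ m ih =>
      rcases Nat.lt_or_ge m n with h | h
      · have : n = m + 1 := by omega
        subst this; omega
      · have h1 := ih h
        have h2 := H m h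
        omega
  rw [Filter.le_liminf_iff]
  intro b hb
  have hbtop : b ≠ ⊤ := by
    intro h; rw [h] at hb; exact (not_top_lt hb).elim
  set d : ENNReal := 2 - b with hd
  have hd0 : d ≠ 0 := by
    simp only [hd]
    rw [← pos_iff_ne_zero, tsub_pos_iff_lt]
    exact hb
  have hdtop : d ≠ ⊤ := by
    simp only [hd]
    exact (tsub_le_self.trans_lt (by norm_num : (2:ENNReal) < ⊤)).ne
  have hdR : 0 < d.toReal := ENNReal.toReal_pos hd0 hdtop
  obtain ⟨M₀, hM₀⟩ := exists_nat_gt ((2 * n : ℝ) / d.toReal)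
  have hdM : (2 * n : ENNReal) < d * M₀ := by
    have h1 : (2 * n : ℝ) < d.toReal * M₀ := by
      rw [div_lt_iff₀ hdR] at hM₀
      linarith [hM₀]
    calc (2 * n : ENNReal) = ENNReal.ofReal (2 * n : ℝ) := by
          rw [ENNReal.ofReal_mul (by norm_num : (0:ℝ) ≤ 2), ENNReal.ofReal_natCast]
          norm_num
      _ < ENNReal.ofReal (d.toReal * M₀) :=
          (ENNReal.ofReal_lt_ofReal_iff (lt_of_le_of_lt (by positivity) h1)).2 h1
      _ = ENNReal.ofReal d.toReal * ENNReal.ofReal (M₀ : ℝ) :=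
          ENNReal.ofReal_mul ENNReal.toReal_nonneg
      _ = d * M₀ := by rw [ENNReal.ofReal_toReal hdtop, ENNReal.ofReal_natCast]
  filter_upwards [Filter.eventually_ge_atTop (max (max n M₀) 1)] with m hm
  have hmn : n ≤ m := le_trans (le_trans (le_max_left _ _) (le_max_left _ _)) hm
  have hmM : M₀ ≤ m := le_trans (le_trans (le_max_right _ _) (le_max_left _ _)) hm
  have hm1 : 1 ≤ m := le_trans (le_max_right _ _) hm
  set p : ℕ := complexity x m with hp
  have hmne0 : (m : ENNReal) ≠ 0 := by
    simp only [ne_eq, Nat.cast_eq_zero]; omega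
  have hmnetop : (m : ENNReal) ≠ ⊤ := ENNReal.natCast_ne_top m
  rw [ENNReal.lt_div_iff_mul_lt (Or.inl hmne0) (Or.inl hmnetop)]
  -- key chain
  have hdm : (2 * n : ENNReal) < d * m := lt_of_lt_of_le hdM
    (mul_le_mul_right (Nat.cast_le.2 hmM) d)
  have hcast : (2 : ENNReal) * m + 1 ≤ (p : ENNReal) + 2 * n := by
    have := hlin m hmn
    have : ((2 * m + 1 : ℕ) : ENNReal) ≤ ((p + 2 * n : ℕ) : ENNReal) := Nat.cast_le.2 this
    push_cast at this
    convert this using 2 <;> push_cast <;> ring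
  have hchain : b * m + d * m < (p : ENNReal) + d * m := by
    calc b * m + d * m = (b + d) * m := (add_mul b d m).symm
      _ = 2 * m := by rw [hd, add_tsub_cancel_of_le hb.le]
      _ ≤ (p : ENNReal) + 2 * n := le_trans (le_add_of_nonneg_right zero_le) hcast
      _ < (p : ENNReal) + d * m := by
          exact ENNReal.add_lt_add_left (ENNReal.natCast_ne_top p) hdm
  have hdmtop : d * m ≠ ⊤ := ENNReal.mul_ne_top hdtop hmnetop
  exact (ENNReal.add_lt_add_iff_right hdmtop).1 hchain


end Aux

theorem unique_essential_rightSpecial {A : Type*} [Fintype A] (x : ℕ → A)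
    (hx : ¬ UltimatelyPeriodic x)
    (hliminf : Filter.liminf (fun n : ℕ => (complexity x n : ENNReal) / (n : ENNReal))
      Filter.atTop < 2) :
    ∀ n : ℕ, 1 ≤ n →
      ∃! w : List A, w.length = n ∧ EssentialRightSpecial w x := by
  intro n hn
  obtain ⟨w, hwlen, hwe⟩ := exists_essential x hx n
  refine ⟨w, ⟨hwlen, hwe⟩, ?_⟩
  rintro y ⟨hylen, hye⟩
  by_contra hne
  have H : ∀ m, n ≤ m → complexity x m + 2 ≤ complexity x (m + 1) := by
    intro m hm
    obtain ⟨W₁, hW₁len, hW₁rs, hW₁d⟩ := hye.2 m (by rw [hylen]; exact hm)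
    obtain ⟨W₂, hW₂len, hW₂rs, hW₂d⟩ := hwe.2 m (by rw [hwlen]; exact hm)
    have hWne : W₁ ≠ W₂ := by
      intro h
      apply hne
      rw [← hW₁d, ← hW₂d, h, hylen, hwlen]
    exact complexity_add_two_le x m hW₁len hW₂len hWne hW₁rs hW₂rs
  exact absurd hliminf (not_lt.2 (liminf_ge_two x n H))
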